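/- The group SL2(E) is generated by the two subgroups U = SL2(O_E) and U' = diag(1, π)·SL2(O_E)·diag(1, π)^{−1}. Consequently, for every module σ over SL2(E) (over any commutative coefficient ring Λ), the submodule of SL2(E)-fixed vectors equals σ^U ∩ σ^{U'}; this is the degree-zero part of the computation of the smooth SL2(E)-cohomology of σ via the Bruhat–Tits building. -/

import Mathlib

noncomputable section

open Matrix

/-- A surjective discrete (rank-one) valuation on a field `E`, written additively.
This is the algebraic structure of a nonarchimedean local field used in the statements. -/
structure DiscreteVal (E : Type) [Field E] : Type where
  v : E → ℤ
  v_mul : ∀ x y : E, x ≠ 0 → y ≠ 0 → v (x * y) = v x + v y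
  v_min_le_add : ∀ x y : E, x ≠ 0 → y ≠ 0 → x + y ≠ 0 → min (v x) (v y) ≤ v (x + y)
  surj : ∀ n : ℤ, ∃ x : E, x ≠ 0 ∧ v x = n

namespace DiscreteVal

variable {E : Type} [Field E]

/-- The valuation ring `O_E = {x : x = 0 or v x ≥ 0}`. -/
def O (ν : DiscreteVal E) : Set E := {x : E | x = 0 ∨ 0 ≤ ν.v x}

/-- `π` is a uniformizer: `π ≠ 0` and `v π = 1`. -/
def IsUniformizer (ν : DiscreteVal E) (π : E) : Prop := π ≠ 0 ∧ ν.v π = 1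

/-- The set `π^m · O_E` for `m : ℤ`. -/
def ball (ν : DiscreteVal E) (π : E) (m : ℤ) : Set E :=
  {y : E | ∃ z ∈ ν.O, y = π ^ m * z}

end DiscreteVal

section ProjLine

variable {E : Type} [Field E]

/-- The point `[a : b]` of the projective line over `E`. -/
def projPt (a b : E) (h : a ≠ 0 ∨ b ≠ 0) : Projectivization E (Fin 2 → E) :=
  Projectivization.mk E ![a, b] (by
    intro hc
    rcases h with h | h
    · exact h (by simpa using congrFun hc 0)
    · exact h (by simpa using congrFun hc 1))

/-- The point `∞ = [0 : 1]`. -/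
def inftyPt (E : Type) [Field E] : Projectivization E (Fin 2 → E) :=
  projPt 0 1 (Or.inr one_ne_zero)

/-- The point `[1 : t]`. -/
def onePt (t : E) : Projectivization E (Fin 2 → E) :=
  projPt 1 t (Or.inl one_ne_zero)

theorem vecMulLinear_injective (g : SpecialLinearGroup (Fin 2) E) :
    Function.Injective (g.1.vecMulLinear) := by
  intro x y hxy
  have h1 : x ᵥ* g.1 = y ᵥ* g.1 := by
    simpa [Matrix.vecMulLinear_apply] using hxy
  have h3 : g.1 * (g⁻¹).1 = 1 := by
    rw [← Matrix.SpecialLinearGroup.coe_mul, mul_inv_cancel, Matrix.SpecialLinearGroup.coe_one]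
  calc x = x ᵥ* (g.1 * (g⁻¹).1) := by rw [h3, Matrix.vecMul_one]
    _ = (x ᵥ* g.1) ᵥ* (g⁻¹).1 := (Matrix.vecMul_vecMul x g.1 (g⁻¹).1).symm
    _ = (y ᵥ* g.1) ᵥ* (g⁻¹).1 := by rw [h1]
    _ = y ᵥ* (g.1 * (g⁻¹).1) := Matrix.vecMul_vecMul y g.1 (g⁻¹).1
    _ = y := by rw [h3, Matrix.vecMul_one]

/-- The right action `[w] · g := [w ᵥ* g]` of `SL₂(E)` on the projective line
(rows vectors times matrix). -/
def ract (x : Projectivization E (Fin 2 → E)) (g : SpecialLinearGroup (Fin 2) E) :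
    Projectivization E (Fin 2 → E) :=
  Projectivization.map (g.1.vecMulLinear) (vecMulLinear_injective g) x

/-- The orbit of `x` under a set `Γ` of elements of `SL₂(E)` (acting on the right). -/
def orbitOf (Γ : Set (SpecialLinearGroup (Fin 2) E))
    (x : Projectivization E (Fin 2 → E)) : Set (Projectivization E (Fin 2 → E)) :=
  {y | ∃ g ∈ Γ, y = ract x g}

variable (ν : DiscreteVal E) (π : E)

/-- The principal congruence subgroup `Γ_k` of level `k` (as a subset of `SL₂(E)`):
integral matrices congruent to the identity modulo `π^k`. -/
def congrSub (k : ℕ) : Set (SpecialLinearGroup (Fin 2) E) :=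
  {g | ∀ i j, g.1 i j - (1 : Matrix (Fin 2) (Fin 2) E) i j ∈ ν.ball π (k : ℤ)}

/-- The maximal compact subgroup `U = SL₂(O_E)` (as a subset of `SL₂(E)`). -/
def slIntegral : Set (SpecialLinearGroup (Fin 2) E) :=
  {g | ∀ i j, g.1 i j ∈ ν.O}

/-- The Iwahori subgroup `Γ₀` (as a subset): integral matrices whose
lower-left entry lies in `πO_E`. -/
def iwahori : Set (SpecialLinearGroup (Fin 2) E) :=
  {g | (∀ i j, g.1 i j ∈ ν.O) ∧ g.1 1 0 ∈ ν.ball π 1}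

/-- The subgroup `U' = diag(1,π) SL₂(O_E) diag(1,π)⁻¹` (as a subset), described
by entry conditions. -/
def slConj : Set (SpecialLinearGroup (Fin 2) E) :=
  {g | g.1 0 0 ∈ ν.O ∧ g.1 1 1 ∈ ν.O ∧ g.1 0 1 ∈ ν.ball π (-1) ∧ g.1 1 0 ∈ ν.ball π 1}

end ProjLine

/-!
STATEMENT 10: `SL₂(E)` is generated by the two subgroups `U = SL₂(O_E)` and
`U' = diag(1,π)·SL₂(O_E)·diag(1,π)⁻¹`.  Consequently, for every module `σ` over
`SL₂(E)` (over any commutative coefficient ring `Λ`), the submodule of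
`SL₂(E)`-fixed vectors equals `σ^U ∩ σ^{U'}`.
-/


section Aux
namespace SL2Gen
variable {E : Type} [Field E]

lemma v_one (ν : DiscreteVal E) : ν.v 1 = 0 := by
  have h := ν.v_mul 1 1 one_ne_zero one_ne_zero
  rw [one_mul] at h; omega

lemma one_mem_O (ν : DiscreteVal E) : (1 : E) ∈ ν.O := Or.inr (le_of_eq (v_one ν).symm)

lemma v_neg_one (ν : DiscreteVal E) : ν.v (-1 : E) = 0 := by
  have h := ν.v_mul (-1 : E) (-1) (by norm_num) (by norm_num)
  rw [neg_mul_neg, one_mul, v_one] at h; omega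

lemma neg_one_mem_O (ν : DiscreteVal E) : (-1 : E) ∈ ν.O :=
  Or.inr (le_of_eq (v_neg_one ν).symm)

lemma zero_mem_O (ν : DiscreteVal E) : (0 : E) ∈ ν.O := Or.inl rfl

lemma v_pow_mul (ν : DiscreteVal E) (π : E) (hπ : ν.IsUniformizer π) (t : E) (ht : t ≠ 0)
    (n : ℕ) : ν.v (π ^ n * t) = n + ν.v t := by
  induction n with
  | zero => simp
  | succ n ih =>
    have hp := hπ.1
    have h1 : π ^ (n + 1) * t = π * (π ^ n * t) := by ring
    rw [h1, ν.v_mul π _ hp (mul_ne_zero (pow_ne_zero _ hp) ht), hπ.2, ih]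
    push_cast; ring

def E12 (t : E) : SpecialLinearGroup (Fin 2) E :=
  ⟨!![1, t; 0, 1], by simp [Matrix.det_fin_two_of]⟩

def E21 (t : E) : SpecialLinearGroup (Fin 2) E :=
  ⟨!![1, 0; t, 1], by simp [Matrix.det_fin_two_of]⟩

def wM : SpecialLinearGroup (Fin 2) E :=
  ⟨!![0, 1; -1, 0], by simp [Matrix.det_fin_two_of]⟩

def wI : SpecialLinearGroup (Fin 2) E :=
  ⟨!![0, -1; 1, 0], by simp [Matrix.det_fin_two_of]⟩

def gP (π : E) (hπ : π ≠ 0) : SpecialLinearGroup (Fin 2) E :=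
  ⟨!![0, π⁻¹; -π, 0], by simp [Matrix.det_fin_two_of, hπ]⟩

def gPI (π : E) (hπ : π ≠ 0) : SpecialLinearGroup (Fin 2) E :=
  ⟨!![0, -π⁻¹; π, 0], by simp [Matrix.det_fin_two_of, hπ]⟩

variable (ν : DiscreteVal E) (π : E)

lemma E12_mem_int (t : E) (ht : t ∈ ν.O) : E12 t ∈ slIntegral ν := by
  intro i j
  fin_cases i <;> fin_cases j <;>
    simp only [E12, Matrix.cons_val', Matrix.cons_val_zero, Matrix.cons_val_one,
      Matrix.head_cons, Matrix.empty_val', Matrix.cons_val_fin_one, Matrix.head_fin_const] <;>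
    first
      | exact one_mem_O ν
      | exact ht
      | exact zero_mem_O ν

lemma wM_mem : (wM : SpecialLinearGroup (Fin 2) E) ∈ slIntegral ν := by
  intro i j
  fin_cases i <;> fin_cases j <;>
    simp only [wM, Matrix.cons_val', Matrix.cons_val_zero, Matrix.cons_val_one,
      Matrix.head_cons, Matrix.empty_val', Matrix.cons_val_fin_one, Matrix.head_fin_const] <;>
    first
      | exact one_mem_O ν
      | exact neg_one_mem_O ν
      | exact zero_mem_O ν

lemma wI_mem : (wI : SpecialLinearGroup (Fin 2) E) ∈ slIntegral ν := by
  intro i j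
  fin_cases i <;> fin_cases j <;>
    simp only [wI, Matrix.cons_val', Matrix.cons_val_zero, Matrix.cons_val_one,
      Matrix.head_cons, Matrix.empty_val', Matrix.cons_val_fin_one, Matrix.head_fin_const] <;>
    first
      | exact one_mem_O ν
      | exact neg_one_mem_O ν
      | exact zero_mem_O ν

lemma pi_mem_ball : π ∈ ν.ball π 1 := ⟨1, one_mem_O ν, by rw [zpow_one, mul_one]⟩

lemma neg_pi_mem_ball : -π ∈ ν.ball π 1 := ⟨-1, neg_one_mem_O ν, by rw [zpow_one]; ring⟩

lemma zero_mem_ball (m : ℤ) : (0 : E) ∈ ν.ball π m := ⟨0, zero_mem_O ν, by ring⟩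

lemma inv_mem_ball : π⁻¹ ∈ ν.ball π (-1) := ⟨1, one_mem_O ν, by rw [_root_.zpow_neg_one, mul_one]⟩

lemma neg_inv_mem_ball : -π⁻¹ ∈ ν.ball π (-1) :=
  ⟨-1, neg_one_mem_O ν, by rw [_root_.zpow_neg_one]; ring⟩

lemma gP_mem (hπ : π ≠ 0) : gP π hπ ∈ slConj ν π := by
  refine ⟨?_, ?_, ?_, ?_⟩ <;>
    simp only [gP, Matrix.cons_val', Matrix.cons_val_zero, Matrix.cons_val_one,
      Matrix.head_cons, Matrix.empty_val', Matrix.cons_val_fin_one, Matrix.head_fin_const]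
  exacts [zero_mem_O ν, zero_mem_O ν, inv_mem_ball ν π, neg_pi_mem_ball ν π]

lemma gPI_mem (hπ : π ≠ 0) : gPI π hπ ∈ slConj ν π := by
  refine ⟨?_, ?_, ?_, ?_⟩ <;>
    simp only [gPI, Matrix.cons_val', Matrix.cons_val_zero, Matrix.cons_val_one,
      Matrix.head_cons, Matrix.empty_val', Matrix.cons_val_fin_one, Matrix.head_fin_const]
  exacts [zero_mem_O ν, zero_mem_O ν, neg_inv_mem_ball ν π, pi_mem_ball ν π]

lemma coe_mul' (A B : SpecialLinearGroup (Fin 2) E) : (A * B).1 = A.1 * B.1 := rfl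

lemma wI_mul_wM : (wI : SpecialLinearGroup (Fin 2) E) * wM = 1 := by
  apply Subtype.ext
  rw [coe_mul']
  simp only [SpecialLinearGroup.coe_mul, wI, wM, SpecialLinearGroup.coe_one]
  ext i j
  fin_cases i <;> fin_cases j <;>
    simp [Matrix.mul_apply, Fin.sum_univ_two, Matrix.one_apply]

lemma E21_eq (t : E) : (E21 t : SpecialLinearGroup (Fin 2) E) = wM * E12 (-t) * wI := by
  apply Subtype.ext
  rw [coe_mul', coe_mul']
  simp only [SpecialLinearGroup.coe_mul, wM, wI, E12, E21]
  ext i j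
  fin_cases i <;> fin_cases j <;>
    simp [Matrix.mul_apply, Fin.sum_univ_two] <;> ring

lemma E12_conj (hπ : π ≠ 0) (t : E) :
    E12 t = gPI π hπ * wI * E12 (π ^ 2 * t) * (wM * gP π hπ) := by
  apply Subtype.ext
  rw [coe_mul', coe_mul', coe_mul', coe_mul']
  simp only [SpecialLinearGroup.coe_mul, gPI, wI, wM, gP, E12]
  ext i j
  fin_cases i <;> fin_cases j <;>
    simp [Matrix.mul_apply, Fin.sum_univ_two] <;> field_simp <;> ring

lemma factor_mat (a b c d t : E) (ht : t * c = 1 - a) (hdet : a * d - b * c = 1) :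
    !![a, b; c, d] = !![1, -t; 0, 1] * !![1, 0; c, 1] * !![1, b + t * d; 0, 1] := by
  ext i j
  fin_cases i <;> fin_cases j
  · simp [Matrix.mul_apply, Fin.sum_univ_two]
    linear_combination ht
  · simp [Matrix.mul_apply, Fin.sum_univ_two]
    linear_combination t * d * ht - t * hdet
  · simp [Matrix.mul_apply, Fin.sum_univ_two]
  · simp [Matrix.mul_apply, Fin.sum_univ_two]
    linear_combination -d * ht + hdet

lemma factor_sl2 (g : SpecialLinearGroup (Fin 2) E) (hc : g.1 1 0 ≠ 0) (t : E)
    (ht : t * g.1 1 0 = 1 - g.1 0 0) :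
    g = E12 (-t) * E21 (g.1 1 0) * E12 (g.1 0 1 + t * g.1 1 1) := by
  have hdet : g.1 0 0 * g.1 1 1 - g.1 0 1 * g.1 1 0 = 1 := by
    have h := g.2
    rwa [Matrix.det_fin_two] at h
  apply Subtype.ext
  simp only [SpecialLinearGroup.coe_mul, E12, E21]
  conv_lhs => rw [Matrix.eta_fin_two g.1]
  exact factor_mat _ _ _ _ _ ht hdet

lemma E12_mem (hπ : ν.IsUniformizer π) (t : E) :
    E12 t ∈ Subgroup.closure (slIntegral ν ∪ slConj ν π) := by
  set H := Subgroup.closure (slIntegral ν ∪ slConj ν π) with hH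
  have base : ∀ s : E, s ∈ ν.O → E12 s ∈ H := fun s hs =>
    Subgroup.subset_closure (Or.inl (E12_mem_int ν s hs))
  have key : ∀ n : ℕ, ∀ s : E, (s = 0 ∨ -(2 * (n : ℤ)) ≤ ν.v s) → E12 s ∈ H := by
    intro n
    induction n with
    | zero =>
      intro s hs
      apply base
      rcases hs with h | h
      · exact Or.inl h
      · exact Or.inr (by omega)
    | succ n ih =>
      intro s hs
      rcases eq_or_ne s 0 with h0 | h0
      · exact base s (Or.inl h0)
      · have hv : ν.v (π ^ 2 * s) = 2 + ν.v s := by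
          have h := v_pow_mul ν π hπ s h0 2
          push_cast at h
          omega
        have h1 : E12 (π ^ 2 * s) ∈ H := by
          apply ih
          right
          rw [hv]
          rcases hs with h | h
          · exact absurd h h0
          · push_cast at h ⊢; omega
        rw [E12_conj π hπ.1 s]
        exact mul_mem
          (mul_mem
            (mul_mem (Subgroup.subset_closure (Or.inr (gPI_mem ν π hπ.1)))
              (Subgroup.subset_closure (Or.inl (wI_mem ν))))
            h1)
          (mul_mem (Subgroup.subset_closure (Or.inl (wM_mem ν)))
            (Subgroup.subset_closure (Or.inr (gP_mem ν π hπ.1))))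
  rcases eq_or_ne t 0 with h0 | h0
  · exact base t (Or.inl h0)
  · exact key (ν.v t).natAbs t (Or.inr (by omega))

lemma E21_mem (hπ : ν.IsUniformizer π) (t : E) :
    E21 t ∈ Subgroup.closure (slIntegral ν ∪ slConj ν π) := by
  rw [E21_eq]
  exact mul_mem
    (mul_mem (Subgroup.subset_closure (Or.inl (wM_mem ν))) (E12_mem ν π hπ (-t)))
    (Subgroup.subset_closure (Or.inl (wI_mem ν)))

lemma closure_eq_top (hπ : ν.IsUniformizer π) :
    Subgroup.closure (slIntegral ν ∪ slConj ν π) =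
      (⊤ : Subgroup (SpecialLinearGroup (Fin 2) E)) := by
  rw [Subgroup.eq_top_iff']
  intro g
  have main : ∀ h : SpecialLinearGroup (Fin 2) E, h.1 1 0 ≠ 0 →
      h ∈ Subgroup.closure (slIntegral ν ∪ slConj ν π) := by
    intro h hc
    rw [factor_sl2 h hc ((1 - h.1 0 0) / h.1 1 0) (div_mul_cancel₀ _ hc)]
    exact mul_mem (mul_mem (E12_mem ν π hπ _) (E21_mem ν π hπ _)) (E12_mem ν π hπ _)
  by_cases hc : g.1 1 0 ≠ 0
  · exact main g hc
  · push_neg at hc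
    have hdet : g.1 0 0 * g.1 1 1 - g.1 0 1 * g.1 1 0 = 1 := by
      have h := g.2
      rwa [Matrix.det_fin_two] at h
    have ha : g.1 0 0 ≠ 0 := by
      intro h0
      rw [h0, hc] at hdet
      simp at hdet
    have hwg : (wM * g).1 1 0 ≠ 0 := by
      have h2 : (wM * g).1 1 0 = -(g.1 0 0) := by
        rw [coe_mul', Matrix.mul_apply, Fin.sum_univ_two]
        simp [wM]
      rw [h2]
      exact neg_ne_zero.mpr ha
    have hg : g = wI * (wM * g) := by
      rw [← mul_assoc, wI_mul_wM, one_mul]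
    rw [hg]
    exact mul_mem (Subgroup.subset_closure (Or.inl (wI_mem ν))) (main _ hwg)

end SL2Gen
end Aux

theorem sl2_generated_by_U_and_U'
    {E : Type} [Field E] (ν : DiscreteVal E) (π : E) (hπ : ν.IsUniformizer π) :
    Subgroup.closure (slIntegral ν ∪ slConj ν π) =
        (⊤ : Subgroup (SpecialLinearGroup (Fin 2) E)) ∧
      ∀ (Λ : Type) [CommRing Λ] (σ : Type) [AddCommGroup σ] [Module Λ σ]
        (ρ : Representation Λ (SpecialLinearGroup (Fin 2) E) σ),
        {x : σ | ∀ g : SpecialLinearGroup (Fin 2) E, ρ g x = x} =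
          {x : σ | ∀ g ∈ slIntegral ν, ρ g x = x} ∩
            {x : σ | ∀ g ∈ slConj ν π, ρ g x = x} := by
  refine ⟨SL2Gen.closure_eq_top ν π hπ, ?_⟩
  intro Λ _ σ _ _ ρ
  ext x
  simp only [Set.mem_setOf_eq, Set.mem_inter_iff]
  constructor
  · intro hx
    exact ⟨fun g _ => hx g, fun g _ => hx g⟩
  · rintro ⟨hU, hU'⟩ g
    have hg : g ∈ Subgroup.closure (slIntegral ν ∪ slConj ν π) := by
      rw [SL2Gen.closure_eq_top ν π hπ]; trivial
    refine Subgroup.closure_induction ?_ ?_ ?_ ?_ hg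
    · rintro y (hy | hy)
      · exact hU y hy
      · exact hU' y hy
    · simp
    · intro y z _ _ hy hz
      rw [_root_.map_mul, Module.End.mul_apply, hz, hy]
    · intro y _ hy
      calc ρ y⁻¹ x = ρ y⁻¹ (ρ y x) := by rw [hy]
        _ = (ρ y⁻¹ * ρ y) x := rfl
        _ = ρ (y⁻¹ * y) x := by rw [_root_.map_mul]
        _ = x := by simp
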